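/- Let f = a_0 + a_1 z + ... + a_m z^m ∈ ℤ[z] be primitive, and suppose there exists α > 0 with |a_m| α^m > |a_0| + |a_1|α + ... + |a_{m-1}| α^{m-1}. If there exist natural numbers n, d, k, ℓ ≤ m and a prime p not dividing d such that n ≥ α + d, f(n) = ± p^k d, gcd(k, ℓ) = 1, p^k divides f^{(i)}(n)/i! for each i = 0,...,ℓ-1, and (when k > 1) p does not divide f^{(ℓ)}(n)/ℓ!, then f is irreducible in ℤ[z]. -/

import Mathlib

open Polynomial Finset

section Vsec
variable {p : ℕ} [Fact p.Prime]

noncomputable def Vv (p : ℕ) (x : ℤ) : ℕ∞ := if x = 0 then ⊤ else (padicValInt p x : ℕ∞)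

lemma Vv_dvd_iff (n : ℕ) (x : ℤ) : (p:ℤ)^n ∣ x ↔ (n:ℕ∞) ≤ Vv p x := by
  by_cases hx : x = 0 <;> simp [Vv, hx, padicValInt_dvd_iff, Nat.cast_le]

lemma Vv_mul (x y : ℤ) : Vv p (x*y) = Vv p x + Vv p y := by
  by_cases hx : x = 0
  · simp [Vv, hx]
  by_cases hy : y = 0
  · simp [Vv, hy]
  simp [Vv, hx, hy, mul_ne_zero hx hy, padicValInt.mul hx hy]

lemma Vv_sum {ι : Type*} (s : Finset ι) (f : ι → ℤ) (hs : s.Nonempty) :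
    ∃ i ∈ s, Vv p (f i) ≤ Vv p (∑ j ∈ s, f j) := by
  obtain ⟨i, hi, hinf⟩ := s.exists_mem_eq_inf hs (fun j => Vv p (f j))
  refine ⟨i, hi, ?_⟩
  rw [← hinf]
  have : ∀ (c : ℕ∞), (∀ j ∈ s, c ≤ Vv p (f j)) → c ≤ Vv p (∑ j ∈ s, f j) := by
    intro c hc
    cases c using ENat.recTopCoe with
    | top =>
        have : ∀ j ∈ s, f j = 0 := by
          intro j hj
          have := hc j hj
          by_contra h
          rw [top_le_iff] at this
          simp [Vv, h] at this
        rw [Finset.sum_congr rfl this]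
        simp [Vv]
    | coe n =>
        rw [← Vv_dvd_iff]
        exact Finset.dvd_sum (fun j hj => (Vv_dvd_iff n (f j)).2 (hc j hj))
  exact this _ (fun j hj => Finset.inf_le hj)

lemma core {k l : ℕ} (G H : ℤ[X]) (s t eG eH : ℕ)
    (hGs : Vv p (G.coeff s) = (eG : ℕ∞))
    (hHs : Vv p (H.coeff t) = (eH : ℕ∞))
    (hGge : ∀ i, ((l * eG + k * s : ℕ) : ℕ∞) ≤ (l:ℕ∞) * Vv p (G.coeff i) + (k:ℕ∞) * i)
    (hHge : ∀ i, ((l * eH + k * t : ℕ) : ℕ∞) ≤ (l:ℕ∞) * Vv p (H.coeff i) + (k:ℕ∞) * i)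
    (hGgt : ∀ i, s < i → ((l * eG + k * s + 1 : ℕ) : ℕ∞) ≤ (l:ℕ∞) * Vv p (G.coeff i) + (k:ℕ∞) * i)
    (hHgt : ∀ i, t < i → ((l * eH + k * t + 1 : ℕ) : ℕ∞) ≤ (l:ℕ∞) * Vv p (H.coeff i) + (k:ℕ∞) * i) :
    Vv p ((G*H).coeff (s+t)) = ((eG + eH : ℕ) : ℕ∞) ∧
    (∀ j, ((l * (eG+eH) + k * (s+t) : ℕ) : ℕ∞) ≤ (l:ℕ∞) * Vv p ((G*H).coeff j) + (k:ℕ∞) * j) ∧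
    (∀ j, s + t < j →
      ((l * (eG+eH) + k * (s+t) + 1 : ℕ) : ℕ∞) ≤ (l:ℕ∞) * Vv p ((G*H).coeff j) + (k:ℕ∞) * j) := by
  classical
  have hsplit : ∀ (x : ℕ × ℕ),
      (l:ℕ∞) * Vv p (G.coeff x.1 * H.coeff x.2) + (k:ℕ∞) * (x.1 + x.2 : ℕ) =
      ((l:ℕ∞) * Vv p (G.coeff x.1) + (k:ℕ∞) * x.1) +
      ((l:ℕ∞) * Vv p (H.coeff x.2) + (k:ℕ∞) * x.2) := by
    intro x
    rw [Vv_mul]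
    push_cast
    ring
  -- weak term bound
  have term_ge : ∀ (x : ℕ × ℕ),
      ((l * (eG+eH) + k * (s+t) : ℕ) : ℕ∞) ≤
        (l:ℕ∞) * Vv p (G.coeff x.1 * H.coeff x.2) + (k:ℕ∞) * (x.1 + x.2 : ℕ) := by
    intro x
    rw [hsplit]
    calc ((l * (eG+eH) + k * (s+t) : ℕ) : ℕ∞)
        = ((l * eG + k * s : ℕ) : ℕ∞) + ((l * eH + k * t : ℕ) : ℕ∞) := by push_cast; ring
      _ ≤ _ := add_le_add (hGge x.1) (hHge x.2)
  -- strict term bound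
  have term_gt : ∀ (x : ℕ × ℕ), (s < x.1 ∨ t < x.2) →
      ((l * (eG+eH) + k * (s+t) + 1 : ℕ) : ℕ∞) ≤
        (l:ℕ∞) * Vv p (G.coeff x.1 * H.coeff x.2) + (k:ℕ∞) * (x.1 + x.2 : ℕ) := by
    rintro x (hx | hx)
    · rw [hsplit]
      calc ((l * (eG+eH) + k * (s+t) + 1 : ℕ) : ℕ∞)
          = ((l * eG + k * s + 1 : ℕ) : ℕ∞) + ((l * eH + k * t : ℕ) : ℕ∞) := by push_cast; ring
        _ ≤ _ := add_le_add (hGgt x.1 hx) (hHge x.2)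
    · rw [hsplit]
      calc ((l * (eG+eH) + k * (s+t) + 1 : ℕ) : ℕ∞)
          = ((l * eG + k * s : ℕ) : ℕ∞) + ((l * eH + k * t + 1 : ℕ) : ℕ∞) := by push_cast; ring
        _ ≤ _ := add_le_add (hGge x.1) (hHgt x.2 hx)
  refine ⟨?_, ?_, ?_⟩
  · -- exact value at s+t
    set e : ℕ := eG + eH with he
    have hkey : Vv p (G.coeff s * H.coeff t) = (e : ℕ∞) := by
      rw [Vv_mul, hGs, hHs]; norm_cast
    have hmem : (s, t) ∈ antidiagonal (s + t) := by simp [Finset.mem_antidiagonal]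
    have hco : (G*H).coeff (s+t) =
        G.coeff s * H.coeff t + ∑ x ∈ (antidiagonal (s+t)).erase (s,t),
          G.coeff x.1 * H.coeff x.2 := by
      rw [Polynomial.coeff_mul, ← Finset.add_sum_erase _ _ hmem]
    have hrest : ∀ x ∈ (antidiagonal (s+t)).erase (s,t),
        (p:ℤ)^(e+1) ∣ G.coeff x.1 * H.coeff x.2 := by
      intro x hx
      obtain ⟨hxne, hxmem⟩ := Finset.mem_erase.mp hx
      have hxsum : x.1 + x.2 = s + t := Finset.HasAntidiagonal.mem_antidiagonal.mp hxmem
      have hor : s < x.1 ∨ t < x.2 := by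
        rcases Nat.lt_or_ge s x.1 with h | h
        · exact Or.inl h
        rcases Nat.lt_or_ge t x.2 with h2 | h2
        · exact Or.inr h2
        exfalso; apply hxne
        have : x.1 = s ∧ x.2 = t := by omega
        exact Prod.ext this.1 this.2
      have hterm := term_gt x hor
      rw [hxsum] at hterm
      rw [Vv_dvd_iff]
      by_contra hcon
      have hVle : Vv p (G.coeff x.1 * H.coeff x.2) ≤ (e : ℕ∞) := by
        have := not_le.mp hcon
        rw [show ((e+1 : ℕ) : ℕ∞) = (e:ℕ∞) + 1 by push_cast; ring] at this
        exact (ENat.lt_add_one_iff (ENat.coe_ne_top e)).mp this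
      have : (l:ℕ∞) * Vv p (G.coeff x.1 * H.coeff x.2) + (k:ℕ∞) * ((s+t : ℕ)) ≤
          ((l * e + k * (s+t) : ℕ) : ℕ∞) := by
        calc (l:ℕ∞) * Vv p (G.coeff x.1 * H.coeff x.2) + (k:ℕ∞) * ((s+t : ℕ))
            ≤ (l:ℕ∞) * (e:ℕ∞) + (k:ℕ∞) * ((s+t : ℕ)) :=
              add_le_add_left (mul_le_mul_right hVle _) _
          _ = ((l * e + k * (s+t) : ℕ) : ℕ∞) := by push_cast; ring
      have hcontra := le_trans hterm this
      have : (l * e + k * (s+t) + 1 : ℕ) ≤ (l * e + k * (s+t) : ℕ) := by exact_mod_cast hcontra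
      omega
    have hdvd_e : (p:ℤ)^e ∣ (G*H).coeff (s+t) := by
      rw [hco]
      apply dvd_add
      · exact (Vv_dvd_iff e _).mpr (le_of_eq hkey.symm)
      · exact Finset.dvd_sum (fun x hx =>
          dvd_trans (pow_dvd_pow _ (Nat.le_succ e)) (hrest x hx))
    have hndvd : ¬ (p:ℤ)^(e+1) ∣ (G*H).coeff (s+t) := by
      intro hcon
      have h1 : (p:ℤ)^(e+1) ∣ G.coeff s * H.coeff t := by
        have h2 : (p:ℤ)^(e+1) ∣ ∑ x ∈ (antidiagonal (s+t)).erase (s,t),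
            G.coeff x.1 * H.coeff x.2 := Finset.dvd_sum hrest
        have := dvd_sub hcon h2
        rwa [hco, add_sub_cancel_right] at this
      rw [Vv_dvd_iff, hkey] at h1
      exact absurd (by exact_mod_cast h1) (by omega)
    -- conclude exact
    have hle : (e : ℕ∞) ≤ Vv p ((G*H).coeff (s+t)) := (Vv_dvd_iff e _).mp hdvd_e
    have hge' : Vv p ((G*H).coeff (s+t)) ≤ (e : ℕ∞) := by
      rw [Vv_dvd_iff] at hndvd
      have := not_le.mp hndvd
      rw [show ((e+1 : ℕ) : ℕ∞) = (e:ℕ∞) + 1 by push_cast; ring] at this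
      exact (ENat.lt_add_one_iff (ENat.coe_ne_top e)).mp this
    exact le_antisymm hge' hle
  · -- weak bound everywhere
    intro j
    have hne : (antidiagonal j).Nonempty := ⟨(0, j), by simp [Finset.mem_antidiagonal]⟩
    obtain ⟨x, hx, hxle⟩ := Vv_sum (p := p) (antidiagonal j) (fun x => G.coeff x.1 * H.coeff x.2) hne
    have hxsum : x.1 + x.2 = j := Finset.HasAntidiagonal.mem_antidiagonal.mp hx
    have := term_ge x
    rw [hxsum] at this
    calc ((l * (eG+eH) + k * (s+t) : ℕ) : ℕ∞)
        ≤ (l:ℕ∞) * Vv p (G.coeff x.1 * H.coeff x.2) + (k:ℕ∞) * (j:ℕ) := this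
      _ ≤ (l:ℕ∞) * Vv p ((G*H).coeff j) + (k:ℕ∞) * (j:ℕ) := by
          rw [Polynomial.coeff_mul]
          exact add_le_add_left (mul_le_mul_right hxle _) _
  · -- strict bound beyond s+t
    intro j hj
    have hne : (antidiagonal j).Nonempty := ⟨(0, j), by simp [Finset.mem_antidiagonal]⟩
    obtain ⟨x, hx, hxle⟩ := Vv_sum (p := p) (antidiagonal j) (fun x => G.coeff x.1 * H.coeff x.2) hne
    have hxsum : x.1 + x.2 = j := Finset.HasAntidiagonal.mem_antidiagonal.mp hx
    have hor : s < x.1 ∨ t < x.2 := by omega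
    have := term_gt x hor
    rw [hxsum] at this
    calc ((l * (eG+eH) + k * (s+t) + 1 : ℕ) : ℕ∞)
        ≤ (l:ℕ∞) * Vv p (G.coeff x.1 * H.coeff x.2) + (k:ℕ∞) * (j:ℕ) := this
      _ ≤ (l:ℕ∞) * Vv p ((G*H).coeff j) + (k:ℕ∞) * (j:ℕ) := by
          rw [Polynomial.coeff_mul]
          exact add_le_add_left (mul_le_mul_right hxle _) _
lemma exists_max {k l : ℕ} (hl : 0 < l) (G : ℤ[X]) (hG : G ≠ 0) :
    ∃ s eG : ℕ, Vv p (G.coeff s) = (eG : ℕ∞) ∧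
      (∀ i, ((l * eG + k * s : ℕ) : ℕ∞) ≤ (l:ℕ∞) * Vv p (G.coeff i) + (k:ℕ∞) * i) ∧
      (∀ i, s < i → ((l * eG + k * s + 1 : ℕ) : ℕ∞) ≤ (l:ℕ∞) * Vv p (G.coeff i) + (k:ℕ∞) * i) := by
  classical
  have hS : G.support.Nonempty := Polynomial.nonempty_support_iff.mpr hG
  set wt : ℕ → ℕ := fun i => l * padicValInt p (G.coeff i) + k * i with hwt
  set c : ℕ := G.support.inf' hS wt with hc
  have hA : (G.support.filter (fun i => wt i = c)).Nonempty := by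
    obtain ⟨i, hi, hieq⟩ := G.support.exists_mem_eq_inf' hS wt
    exact ⟨i, Finset.mem_filter.mpr ⟨hi, hieq.symm⟩⟩
  set s := (G.support.filter (fun i => wt i = c)).max' hA with hs
  have hsmem := (G.support.filter (fun i => wt i = c)).max'_mem hA
  rw [Finset.mem_filter] at hsmem
  have hs0 : G.coeff s ≠ 0 := Polynomial.mem_support_iff.mp hsmem.1
  refine ⟨s, padicValInt p (G.coeff s), by simp [Vv, hs0], ?_, ?_⟩
  · intro i
    have hcs : (l * padicValInt p (G.coeff s) + k * s : ℕ) = c := hsmem.2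
    rw [hcs]
    by_cases hi : G.coeff i = 0
    · have : (l:ℕ∞) * Vv p (G.coeff i) = ⊤ := by
        simp [Vv, hi, ENat.mul_top, Nat.cast_ne_zero, hl.ne']
      rw [this]; simp
    · have h1 : c ≤ wt i := Finset.inf'_le wt (Polynomial.mem_support_iff.mpr hi)
      have : ((wt i : ℕ) : ℕ∞) = (l:ℕ∞) * Vv p (G.coeff i) + (k:ℕ∞) * i := by
        push_cast [hwt, Vv, hi]; ring
      rw [← this]
      exact_mod_cast h1
  · intro i hi
    have hcs : (l * padicValInt p (G.coeff s) + k * s : ℕ) = c := hsmem.2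
    rw [hcs]
    by_cases hi0 : G.coeff i = 0
    · have : (l:ℕ∞) * Vv p (G.coeff i) = ⊤ := by
        simp [Vv, hi0, ENat.mul_top, Nat.cast_ne_zero, hl.ne']
      rw [this]; simp
    · have hmem : i ∈ G.support := Polynomial.mem_support_iff.mpr hi0
      have h1 : c ≤ wt i := Finset.inf'_le wt hmem
      have h2 : wt i ≠ c := by
        intro hEq
        have : i ∈ G.support.filter (fun j => wt j = c) := Finset.mem_filter.mpr ⟨hmem, hEq⟩
        exact absurd (Finset.le_max' _ i this) (not_le.mpr hi)
      have h3 : c + 1 ≤ wt i := by omega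
      have : ((wt i : ℕ) : ℕ∞) = (l:ℕ∞) * Vv p (G.coeff i) + (k:ℕ∞) * i := by
        push_cast [hwt, Vv, hi0]; ring
      rw [← this]
      exact_mod_cast h3

lemma keyB {p k l : ℕ} (hp : p.Prime) (hk : 0 < k) (hl : 0 < l) (hcop : Nat.Coprime k l)
    (G H : ℤ[X])
    (hG0 : (p:ℤ) ∣ G.coeff 0) (hH0 : (p:ℤ) ∣ H.coeff 0)
    (hF0 : ¬ (p:ℤ)^(k+1) ∣ (G*H).coeff 0)
    (hFlow : ∀ i, i < l → (p:ℤ)^k ∣ (G*H).coeff i)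
    (hFl : ¬ (p:ℤ) ∣ (G*H).coeff l) : False := by
  haveI : Fact p.Prime := ⟨hp⟩
  have hF0k : (p:ℤ)^k ∣ (G*H).coeff 0 := hFlow 0 hl
  have hF0ne : (G*H).coeff 0 ≠ 0 := fun h => hF0 (h ▸ dvd_zero _)
  rw [Polynomial.mul_coeff_zero] at hF0ne hF0 hF0k
  have hG0ne : G.coeff 0 ≠ 0 := left_ne_zero_of_mul hF0ne
  have hH0ne : H.coeff 0 ≠ 0 := right_ne_zero_of_mul hF0ne
  set a : ℕ := padicValInt p (G.coeff 0) with ha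
  set b : ℕ := padicValInt p (H.coeff 0) with hb
  have hVG0 : Vv p (G.coeff 0) = (a : ℕ∞) := by simp [Vv, hG0ne, ha]
  have hVH0 : Vv p (H.coeff 0) = (b : ℕ∞) := by simp [Vv, hH0ne, hb]
  have ha1 : 1 ≤ a := by
    have := (Vv_dvd_iff (p := p) 1 (G.coeff 0)).mp (by simpa using hG0)
    rw [hVG0] at this; exact_mod_cast this
  have hb1 : 1 ≤ b := by
    have := (Vv_dvd_iff (p := p) 1 (H.coeff 0)).mp (by simpa using hH0)
    rw [hVH0] at this; exact_mod_cast this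
  have habk : a + b = k := by
    have hV : Vv p (G.coeff 0 * H.coeff 0) = ((a + b : ℕ) : ℕ∞) := by
      rw [Vv_mul, hVG0, hVH0]; norm_cast
    have h1 : k ≤ a + b := by
      have := (Vv_dvd_iff (p := p) k _).mp hF0k
      rw [hV] at this; exact_mod_cast this
    have h2 : ¬ (k + 1 ≤ a + b) := by
      intro hcon
      exact hF0 ((Vv_dvd_iff (p := p) (k+1) _).mpr (by rw [hV]; exact_mod_cast hcon))
    omega
  have hGne : G ≠ 0 := fun h => hG0ne (by simp [h])
  have hHne : H ≠ 0 := fun h => hH0ne (by simp [h])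
  obtain ⟨s, eG, hGs, hGge, hGgt⟩ := exists_max (p := p) (k := k) (l := l) hl G hGne
  obtain ⟨t, eH, hHs, hHge, hHgt⟩ := exists_max (p := p) (k := k) (l := l) hl H hHne
  obtain ⟨hj0, hge, hgt⟩ := core G H s t eG eH hGs hHs hGge hHge hGgt hHgt
  have hcGa : l * eG + k * s ≤ l * a := by
    have h0 := hGge 0
    rw [hVG0] at h0
    have h1 : ((l * eG + k * s : ℕ) : ℕ∞) ≤ ((l * a : ℕ) : ℕ∞) := by
      calc ((l * eG + k * s : ℕ) : ℕ∞) ≤ (l:ℕ∞) * (a:ℕ∞) + (k:ℕ∞) * ((0:ℕ):ℕ∞) := h0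
        _ = ((l * a : ℕ) : ℕ∞) := by push_cast; ring
    exact_mod_cast h1
  have hcHb : l * eH + k * t ≤ l * b := by
    have h0 := hHge 0
    rw [hVH0] at h0
    have h1 : ((l * eH + k * t : ℕ) : ℕ∞) ≤ ((l * b : ℕ) : ℕ∞) := by
      calc ((l * eH + k * t : ℕ) : ℕ∞) ≤ (l:ℕ∞) * (b:ℕ∞) + (k:ℕ∞) * ((0:ℕ):ℕ∞) := h0
        _ = ((l * b : ℕ) : ℕ∞) := by push_cast; ring
    exact_mod_cast h1
  have hFlne : (G*H).coeff l ≠ 0 := fun h => hFl (h ▸ dvd_zero _)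
  have hVFl : Vv p ((G*H).coeff l) = (0 : ℕ∞) := by
    have hz : padicValInt p ((G*H).coeff l) = 0 := by
      by_contra h
      apply hFl
      have h1 : ((1:ℕ):ℕ∞) ≤ Vv p ((G*H).coeff l) := by
        simp only [Vv, hFlne, if_false]
        exact_mod_cast Nat.one_le_iff_ne_zero.mpr h
      have h2 := (Vv_dvd_iff (p := p) 1 ((G*H).coeff l)).mpr h1
      simpa using h2
    simp [Vv, hFlne, hz]
  rcases Nat.lt_trichotomy (s + t) l with hlt | heq | hgt'
  · have hdvd := hFlow (s+t) hlt
    have hek : k ≤ eG + eH := by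
      have := (Vv_dvd_iff (p := p) k _).mp hdvd
      rw [hj0] at this; exact_mod_cast this
    have h1 : l * k ≤ l * (eG + eH) := Nat.mul_le_mul_left l hek
    have h2 : l * (eG + eH) + k * (s + t) ≤ l * k := by
      calc l * (eG + eH) + k * (s + t) = (l * eG + k * s) + (l * eH + k * t) := by ring
        _ ≤ l * a + l * b := by omega
        _ = l * k := by rw [← habk]; ring
    have hst0 : s + t = 0 := by
      by_contra h
      have : 0 < k * (s + t) := Nat.mul_pos hk (Nat.pos_of_ne_zero h)
      omega
    have h5 := hgt l (by omega)
    rw [hVFl] at h5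
    have h3 : ((l * (eG+eH) + k * (s+t) + 1 : ℕ) : ℕ∞) ≤ ((k * l : ℕ) : ℕ∞) := by
      calc ((l * (eG+eH) + k * (s+t) + 1 : ℕ) : ℕ∞) ≤ (l:ℕ∞) * 0 + (k:ℕ∞) * (l:ℕ∞) := h5
        _ = ((k * l : ℕ) : ℕ∞) := by push_cast; ring
    have h4 : l * (eG+eH) + k * (s+t) + 1 ≤ k * l := by exact_mod_cast h3
    have h7 : k * (s+t) = 0 := by rw [hst0, Nat.mul_zero]
    have hmm : k * l = l * k := Nat.mul_comm k l
    omega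
  · have hVeq : ((eG + eH : ℕ) : ℕ∞) = (0:ℕ∞) := by rw [← hj0, heq, hVFl]
    have he0 : eG + eH = 0 := by exact_mod_cast hVeq
    have heG0 : eG = 0 := by omega
    have heH0 : eH = 0 := by omega
    rw [heG0] at hcGa
    rw [heH0] at hcHb
    have hsum : k * s + k * t = l * a + l * b := by
      have h1 : k * (s + t) = l * (a + b) := by rw [heq, habk]; ring
      have h2 : k * s + k * t = k * (s+t) := by ring
      have h3 : l * a + l * b = l * (a+b) := by ring
      omega
    have hks : k * s = l * a := by omega
    have hkt : k * t = l * b := by omega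
    have hls : l ∣ s := by
      have hdv : l ∣ s * k := by
        rw [mul_comm]
        exact ⟨a, hks.symm ▸ rfl⟩
      exact Nat.Coprime.dvd_of_dvd_mul_right (Nat.Coprime.symm hcop) hdv
    rcases Nat.eq_zero_or_pos s with hs0 | hspos
    · rw [hs0, Nat.mul_zero] at hks
      have : l * a = 0 := hks.symm
      have : a = 0 := by
        rcases Nat.mul_eq_zero.mp this with h | h
        · omega
        · exact h
      omega
    · have hlle : l ≤ s := Nat.le_of_dvd hspos hls
      have hsl : s = l := by omega
      have ht0 : t = 0 := by omega
      rw [ht0, Nat.mul_zero] at hkt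
      have : l * b = 0 := hkt.symm
      have : b = 0 := by
        rcases Nat.mul_eq_zero.mp this with h | h
        · omega
        · exact h
      omega
  · have h5 := hge l
    rw [hVFl] at h5
    have h3 : ((l * (eG+eH) + k * (s+t) : ℕ) : ℕ∞) ≤ ((k * l : ℕ) : ℕ∞) := by
      calc ((l * (eG+eH) + k * (s+t) : ℕ) : ℕ∞) ≤ (l:ℕ∞) * 0 + (k:ℕ∞) * (l:ℕ∞) := h5
        _ = ((k * l : ℕ) : ℕ∞) := by push_cast; ring
    have h4 : l * (eG+eH) + k * (s+t) ≤ k * l := by exact_mod_cast h3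
    have h6 : k * l < k * (s + t) := (Nat.mul_lt_mul_left hk).mpr hgt'
    omega



lemma prod_gt_of_forall_gt (d : ℝ) (hd : 1 ≤ d) :
    ∀ (s : Multiset ℝ), (∀ x ∈ s, d < x) → s ≠ 0 → d < s.prod := by
  intro s
  induction s using Multiset.induction_on with
  | empty => intro _ h; exact absurd rfl h
  | cons x t ih =>
    intro hall _
    rw [Multiset.prod_cons]
    rcases eq_or_ne t 0 with rfl | ht
    · simpa using hall x (Multiset.mem_cons_self _ _)
    · have hx := hall x (Multiset.mem_cons_self _ _)
      have hprod := ih (fun y hy => hall y (Multiset.mem_cons_of_mem hy)) ht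
      have h1 : (1:ℝ) < x := lt_of_le_of_lt hd hx
      calc d < t.prod := hprod
        _ = 1 * t.prod := (one_mul _).symm
        _ < x * t.prod :=
            mul_lt_mul_of_pos_right h1 (lt_trans (lt_of_lt_of_le zero_lt_one hd) hprod)

lemma root_bound (m : ℕ) (hm : 0 < m) (f : ℤ[X]) (hdeg : f.natDegree = m)
    (α : ℝ) (hα : 0 < α)
    (hineq : (|f.coeff m| : ℝ) * α ^ m > ∑ i ∈ Finset.range m, (|f.coeff i| : ℝ) * α ^ i)
    (θ : ℂ) (hroot : (f.map (Int.castRingHom ℂ)).eval θ = 0) : ‖θ‖ < α := by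
  by_contra hcon
  push_neg at hcon
  set r := ‖θ‖ with hr
  obtain ⟨M, rfl⟩ : ∃ M, m = M + 1 := ⟨m-1, by omega⟩
  have hmapdeg : (f.map (Int.castRingHom ℂ)).natDegree = M + 1 := by
    rw [Polynomial.natDegree_map_eq_of_injective Int.cast_injective]
    exact hdeg
  have hsum : ∑ i ∈ Finset.range (M+1+1), (f.coeff i : ℂ) * θ^i = 0 := by
    rw [← hroot, Polynomial.eval_eq_sum_range, hmapdeg]
    exact Finset.sum_congr rfl (fun i _ => by rw [Polynomial.coeff_map]; rfl)
  have hsplit : (f.coeff (M+1) : ℂ) * θ^(M+1) =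
      - ∑ i ∈ Finset.range (M+1), (f.coeff i : ℂ) * θ^i := by
    rw [Finset.sum_range_succ] at hsum
    linear_combination hsum
  have hr0 : 0 < r := lt_of_lt_of_le hα hcon
  have habs : (|f.coeff (M+1)| : ℝ) * r^(M+1) ≤
      ∑ i ∈ Finset.range (M+1), (|f.coeff i| : ℝ) * r^i := by
    have h1 : norm ((f.coeff (M+1) : ℂ) * θ^(M+1)) = (|f.coeff (M+1)| : ℝ) * r^(M+1) := by
      rw [norm_mul, norm_pow, Complex.norm_intCast, ← hr]
    have h2 : norm (∑ i ∈ Finset.range (M+1), (f.coeff i : ℂ) * θ^i) ≤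
        ∑ i ∈ Finset.range (M+1), (|f.coeff i| : ℝ) * r^i := by
      refine le_trans (norm_sum_le _ _) (le_of_eq ?_)
      refine Finset.sum_congr rfl (fun i _ => ?_)
      rw [norm_mul, norm_pow, Complex.norm_intCast, ← hr]
    calc (|f.coeff (M+1)| : ℝ) * r^(M+1)
        = norm ((f.coeff (M+1) : ℂ) * θ^(M+1)) := h1.symm
      _ = norm (- ∑ i ∈ Finset.range (M+1), (f.coeff i : ℂ) * θ^i) := by rw [hsplit]
      _ = norm (∑ i ∈ Finset.range (M+1), (f.coeff i : ℂ) * θ^i) := norm_neg _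
      _ ≤ _ := h2
  have hstep : ∀ i ∈ Finset.range (M+1), (|f.coeff i| : ℝ) * r^i * α^M ≤
      (|f.coeff i| : ℝ) * α^i * r^M := by
    intro i hi
    rw [Finset.mem_range] at hi
    have hiM : i ≤ M := by omega
    have hsplitα : α^M = α^i * α^(M-i) := by rw [← pow_add]; congr 1; omega
    have hsplitr : r^M = r^i * r^(M-i) := by rw [← pow_add]; congr 1; omega
    have hpow : α^(M-i) ≤ r^(M-i) := pow_le_pow_left₀ hα.le hcon _
    have h1 : r^i * α^M ≤ α^i * r^M := by
      rw [hsplitα, hsplitr]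
      calc r^i * (α^i * α^(M-i)) = (r^i * α^(M-i)) * α^i := by ring
        _ ≤ (r^i * r^(M-i)) * α^i := by
            apply mul_le_mul_of_nonneg_right
              (mul_le_mul_of_nonneg_left hpow (pow_nonneg hr0.le i)) (pow_nonneg hα.le i)
        _ = α^i * (r^i * r^(M-i)) := by ring
    calc (|f.coeff i| : ℝ) * r^i * α^M = (|f.coeff i| : ℝ) * (r^i * α^M) := by ring
      _ ≤ (|f.coeff i| : ℝ) * (α^i * r^M) := by
          apply mul_le_mul_of_nonneg_left h1; positivity
      _ = (|f.coeff i| : ℝ) * α^i * r^M := by ring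
  have hchain : (∑ i ∈ Finset.range (M+1), (|f.coeff i| : ℝ) * r^i) * α^M <
      (|f.coeff (M+1)| : ℝ) * r^(M+1) * α^M := by
    calc (∑ i ∈ Finset.range (M+1), (|f.coeff i| : ℝ) * r^i) * α^M
        = ∑ i ∈ Finset.range (M+1), (|f.coeff i| : ℝ) * r^i * α^M := by rw [Finset.sum_mul]
      _ ≤ ∑ i ∈ Finset.range (M+1), (|f.coeff i| : ℝ) * α^i * r^M :=
          Finset.sum_le_sum hstep
      _ = (∑ i ∈ Finset.range (M+1), (|f.coeff i| : ℝ) * α^i) * r^M := by rw [Finset.sum_mul]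
      _ < ((|f.coeff (M+1)| : ℝ) * α^(M+1)) * r^M :=
          mul_lt_mul_of_pos_right hineq (pow_pos hr0 _)
      _ = (|f.coeff (M+1)| : ℝ) * α^M * (α * r^M) := by rw [pow_succ]; ring
      _ ≤ (|f.coeff (M+1)| : ℝ) * α^M * (r * r^M) := by
          apply mul_le_mul_of_nonneg_left
            (mul_le_mul_of_nonneg_right hcon (pow_nonneg hr0.le _))
          positivity
      _ = (|f.coeff (M+1)| : ℝ) * r^(M+1) * α^M := by rw [pow_succ]; ring
  have hfinal := mul_le_mul_of_nonneg_right habs (pow_nonneg hα.le M)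
  linarith

lemma size_bound (m : ℕ) (hm : 0 < m) (f : ℤ[X]) (hdeg : f.natDegree = m)
    (α : ℝ) (hα : 0 < α)
    (hineq : (|f.coeff m| : ℝ) * α ^ m > ∑ i ∈ Finset.range m, (|f.coeff i| : ℝ) * α ^ i)
    (n d : ℕ) (hd : 0 < d) (hnα : (n : ℝ) ≥ α + d)
    (g : ℤ[X]) (hdvd : g ∣ f) (hgdeg : 1 ≤ g.natDegree) :
    (d : ℤ) < |g.eval (n : ℤ)| := by
  have hf0 : f ≠ 0 := by
    intro h; rw [h] at hdeg; simp at hdeg; omega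
  have hg0 : g ≠ 0 := fun h => by simp [h] at hgdeg
  set C := Int.castRingHom ℂ with hC
  set gc := g.map C with hgc
  set fc := f.map C with hfc
  have hCinj : Function.Injective C := Int.cast_injective
  have hgc0 : gc ≠ 0 := (Polynomial.map_ne_zero_iff hCinj).mpr hg0
  have hfc0 : fc ≠ 0 := (Polynomial.map_ne_zero_iff hCinj).mpr hf0
  have hgcdeg : gc.natDegree = g.natDegree :=
    Polynomial.natDegree_map_eq_of_injective hCinj g
  have hsplits : gc.Splits := IsAlgClosed.splits gc
  have hrootsub : gc.roots ≤ fc.roots :=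
    Polynomial.roots.le_of_dvd hfc0 (Polynomial.map_dvd C hdvd)
  -- every root of gc has abs < α
  have hroots : ∀ θ ∈ gc.roots, norm ((n:ℂ) - θ) > (d : ℝ) := by
    intro θ hθ
    have hθf : θ ∈ fc.roots := Multiset.mem_of_le hrootsub hθ
    have hθroot : fc.eval θ = 0 := (Polynomial.mem_roots hfc0).mp hθf
    have hbound : ‖θ‖ < α := root_bound m hm f hdeg α hα hineq θ hθroot
    have h1 : norm ((n:ℂ)) - ‖θ‖ ≤ norm ((n:ℂ) - θ) :=
      norm_sub_norm_le _ _
    have h2 : norm ((n:ℂ)) = (n : ℝ) := Complex.norm_natCast n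
    have : (d:ℝ) < (n:ℝ) - ‖θ‖ := by
      have : (n:ℝ) - α ≥ (d:ℝ) := by linarith
      linarith
    rw [h2] at h1
    linarith
  -- eval as product over roots
  have heq := hsplits.eq_prod_roots
  have heval : gc.eval (n:ℂ) =
      gc.leadingCoeff * (gc.roots.map (fun a => (n:ℂ) - a)).prod := by
    conv_lhs => rw [heq]
    rw [Polynomial.eval_mul, Polynomial.eval_C, Polynomial.eval_multiset_prod,
      Multiset.map_map]
    congr 1
    exact congrArg Multiset.prod (Multiset.map_congr rfl (fun x _ => by simp))
  have habs : norm (gc.eval (n:ℂ)) =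
      ‖gc.leadingCoeff‖ * (gc.roots.map (fun a => norm ((n:ℂ) - a))).prod := by
    rw [heval, norm_mul, show ‖(gc.roots.map (fun a => (n:ℂ) - a)).prod‖ =
      ((gc.roots.map (fun a => (n:ℂ) - a)).map (fun z => ‖z‖)).prod from
      map_multiset_prod (normHom : ℂ →*₀ ℝ) _, Multiset.map_map]
    rfl
  -- roots nonempty
  have hcard : gc.roots.card = g.natDegree := by
    rw [← hgcdeg]
    exact (Polynomial.splits_iff_card_roots).mp hsplits
  have hrne : (gc.roots.map (fun a => norm ((n:ℂ) - a))) ≠ 0 := by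
    intro h
    have := congrArg Multiset.card h
    rw [Multiset.card_map] at this
    simp [hcard] at this
    omega
  have hd1 : (1:ℝ) ≤ (d:ℝ) := by exact_mod_cast hd
  have hprod : (d:ℝ) < (gc.roots.map (fun a => norm ((n:ℂ) - a))).prod := by
    apply prod_gt_of_forall_gt _ hd1 _ _ hrne
    intro x hx
    obtain ⟨θ, hθ, rfl⟩ := Multiset.mem_map.mp hx
    exact hroots θ hθ
  -- leading coeff
  have hlead : (1:ℝ) ≤ ‖gc.leadingCoeff‖ := by
    have h1 : gc.leadingCoeff = (g.leadingCoeff : ℂ) := by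
      rw [Polynomial.leadingCoeff, hgcdeg, hgc, Polynomial.coeff_map]
      rfl
    rw [h1, Complex.norm_intCast]
    have : (1:ℤ) ≤ |g.leadingCoeff| := Int.one_le_abs (by
      exact Polynomial.leadingCoeff_ne_zero.mpr hg0)
    exact_mod_cast this
  have hfinal : (d:ℝ) < norm (gc.eval (n:ℂ)) := by
    rw [habs]
    calc (d:ℝ) < (gc.roots.map (fun a => norm ((n:ℂ) - a))).prod := hprod
      _ = 1 * _ := (one_mul _).symm
      _ ≤ ‖gc.leadingCoeff‖ *
          (gc.roots.map (fun a => norm ((n:ℂ) - a))).prod := by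
        apply mul_le_mul_of_nonneg_right hlead
        apply Multiset.prod_nonneg
        intro x hx
        obtain ⟨θ, hθ, rfl⟩ := Multiset.mem_map.mp hx
        exact (norm_nonneg _)
  -- transfer to ℤ
  have hcast : norm (gc.eval (n:ℂ)) = |((g.eval (n:ℤ) : ℤ) : ℝ)| := by
    have h3 : ((n:ℂ)) = (((n:ℤ)) : ℂ) := by push_cast; rfl
    rw [h3, hgc, hC, Polynomial.eval_intCast_map]
    simp
  rw [hcast] at hfinal
  exact_mod_cast hfinal


open Polynomial in
theorem stmt_8 (m : ℕ) (f : ℤ[X]) (hdeg : f.natDegree = m) (hprim : f.IsPrimitive)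
    (α : ℝ) (hα : 0 < α)
    (hineq : (|f.coeff m| : ℝ) * α ^ m >
      ∑ i ∈ Finset.range m, (|f.coeff i| : ℝ) * α ^ i)
    (n d k ℓ : ℕ) (hn : 0 < n) (hd : 0 < d) (hk : 0 < k) (hℓ : 0 < ℓ)
    (hℓm : ℓ ≤ m) (p : ℕ) (hp : p.Prime) (hpd : ¬ p ∣ d)
    (hnα : (n : ℝ) ≥ α + d)
    (hval : f.eval (n : ℤ) = (p : ℤ) ^ k * d ∨ f.eval (n : ℤ) = -((p : ℤ) ^ k * d))
    (hcop : Nat.Coprime k ℓ)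
    (hdiv : ∀ i < ℓ, (p : ℤ) ^ k ∣ (Polynomial.hasseDeriv i f).eval (n : ℤ))
    (hnd : 1 < k → ¬ (p : ℤ) ∣ (Polynomial.hasseDeriv ℓ f).eval (n : ℤ)) :
    Irreducible f := by
  have hm : 0 < m := lt_of_lt_of_le hℓ hℓm
  have hpint : Prime ((p : ℕ) : ℤ) := Nat.prime_iff_prime_int.mp hp
  have hf0 : f ≠ 0 := by
    intro h
    have : IsUnit (2 : ℤ) := hprim (2 : ℤ) (by simp [h])
    exact absurd (Int.isUnit_iff.mp this) (by omega)
  have hFne : ¬ (p:ℤ)^(k+1) ∣ f.eval (n:ℤ) := by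
    intro hdvd
    have hpdz : (p:ℤ) ∣ (d:ℤ) := by
      have h1 : (p:ℤ)^k * (p:ℤ) ∣ (p:ℤ)^k * (d:ℤ) := by
        rw [← pow_succ]
        rcases hval with h | h
        · rwa [h] at hdvd
        · rw [h, dvd_neg] at hdvd; exact hdvd
      exact (mul_dvd_mul_iff_left (pow_ne_zero k hpint.ne_zero)).mp h1
    exact hpd (by exact_mod_cast hpdz)
  constructor
  · intro hu
    have := Polynomial.natDegree_eq_zero_of_isUnit hu
    omega
  · intro a b hab
    by_contra hcon
    push_neg at hcon
    obtain ⟨hua, hub⟩ := hcon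
    have hadeg : 1 ≤ a.natDegree := by
      by_contra h
      push_neg at h
      have h0 : a.natDegree = 0 := by omega
      have hca := Polynomial.eq_C_of_natDegree_eq_zero h0
      have : IsUnit (a.coeff 0) := hprim (a.coeff 0) ⟨b, by rw [hab, ← hca]⟩
      exact hua (hca ▸ this.map Polynomial.C)
    have hbdeg : 1 ≤ b.natDegree := by
      by_contra h
      push_neg at h
      have h0 : b.natDegree = 0 := by omega
      have hcb := Polynomial.eq_C_of_natDegree_eq_zero h0
      have : IsUnit (b.coeff 0) := hprim (b.coeff 0) ⟨a, by rw [hab, ← hcb]; ring⟩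
      exact hub (hcb ▸ this.map Polynomial.C)
    have hsa : (d:ℤ) < |a.eval (n:ℤ)| :=
      size_bound m hm f hdeg α hα hineq n d hd hnα a ⟨b, hab⟩ hadeg
    have hsb : (d:ℤ) < |b.eval (n:ℤ)| :=
      size_bound m hm f hdeg α hα hineq n d hd hnα b ⟨a, by rw [hab]; ring⟩ hbdeg
    have hor : ¬ (p:ℤ) ∣ a.eval (n:ℤ) ∨ ¬ (p:ℤ) ∣ b.eval (n:ℤ) := by
      by_contra hcon2
      push_neg at hcon2
      obtain ⟨hpa, hpb⟩ := hcon2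
      rcases Nat.lt_or_ge 1 k with hk1 | hk1
      · have htay : taylor (n:ℤ) f = taylor (n:ℤ) a * taylor (n:ℤ) b := by
          rw [hab, taylor_mul]
        apply keyB hp hk hℓ hcop (taylor (n:ℤ) a) (taylor (n:ℤ) b)
        · rw [Polynomial.taylor_coeff_zero]; exact hpa
        · rw [Polynomial.taylor_coeff_zero]; exact hpb
        · rw [← htay, Polynomial.taylor_coeff_zero]; exact hFne
        · intro i hi
          rw [← htay, Polynomial.taylor_coeff]
          exact hdiv i hi
        · rw [← htay, Polynomial.taylor_coeff]
          exact hnd hk1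
      · have hk1' : k = 1 := by omega
        apply hFne
        rw [hk1', hab, Polynomial.eval_mul]
        calc ((p:ℤ))^(1+1) = (p:ℤ) * (p:ℤ) := by ring
          _ ∣ a.eval (n:ℤ) * b.eval (n:ℤ) := mul_dvd_mul hpa hpb
    have key : ∀ x y : ℤ, x * y = f.eval (n:ℤ) → ¬(p:ℤ) ∣ y → (d:ℤ) < |y| → False := by
      intro x y hxy hpy hdy
      have hyd : y ∣ (p:ℤ)^k * (d:ℤ) := by
        have h1 : y ∣ f.eval (n:ℤ) := ⟨x, by rw [← hxy]; ring⟩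
        rcases hval with h | h
        · rwa [h] at h1
        · rw [h, dvd_neg] at h1; exact h1
      have hcop2 : IsCoprime y ((p:ℤ)^k) :=
        (IsCoprime.pow_right ((hpint.coprime_iff_not_dvd).mpr hpy).symm)
      have hdd : y ∣ (d:ℤ) := hcop2.dvd_of_dvd_mul_left hyd
      have : |y| ≤ (d:ℤ) := Int.le_of_dvd (by exact_mod_cast hd) ((abs_dvd y (d:ℤ)).mpr hdd)
      omega
    rcases hor with h | h
    · exact key (b.eval (n:ℤ)) (a.eval (n:ℤ))
        (by rw [hab, Polynomial.eval_mul]; ring) h hsa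
    · exact key (a.eval (n:ℤ)) (b.eval (n:ℤ))
        (by rw [hab, Polynomial.eval_mul]) h hsb
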